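/- Theorem 1 (general slicer form): Let D ≥ 1, p ≥ 1, let (Ω, 𝒜, P) be a probability space, and let S : Ω × ℝ^D → ℝ be jointly measurable with |S(ω,x)| ≤ ‖x‖ for all ω ∈ Ω and x ∈ ℝ^D. For Borel probability measures μ, ν on ℝ^D with finite p-th moments, assume the map ω ↦ W_p^p(S(ω,·)♯μ, S(ω,·)♯ν) is measurable and define 𝒟(μ,ν) = (∫_Ω W_p^p(S(ω,·)♯μ, S(ω,·)♯ν) dP(ω))^{1/p}. Then 𝒟 is a pseudo-metric: 𝒟(μ,μ) = 0, 𝒟(μ,ν) = 𝒟(ν,μ), and 𝒟(μ₁,μ₃) ≤ 𝒟(μ₁,μ₂) + 𝒟(μ₂,μ₃) for all Borel probability measures μ, ν, μ₁, μ₂, μ₃ on ℝ^D with finite p-th moments. -/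

import Mathlib

open MeasureTheory ENNReal

noncomputable section

/-- The set of couplings (transport plans) between two measures. -/
def couplings {E : Type*} [MeasurableSpace E] (μ ν : Measure E) : Set (Measure (E × E)) :=
  {π | π.map Prod.fst = μ ∧ π.map Prod.snd = ν}

/-- The Wasserstein distance of order `p`:
`W_p(μ,ν) = (inf over couplings π of ∫ dist(x,y)^p dπ)^(1/p)`. -/
noncomputable def wassersteinDist {E : Type*} [MeasurableSpace E] [PseudoMetricSpace E]
    (p : ℝ) (μ ν : Measure E) : ℝ :=
  (⨅ π ∈ couplings μ ν, ∫⁻ q : E × E, ENNReal.ofReal (dist q.1 q.2 ^ p) ∂π).toReal ^ (1 / p)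

/-- A measure has a finite `p`-th moment. -/
def FiniteMomentP {E : Type*} [MeasurableSpace E] [NormedAddCommGroup E] (p : ℝ)
    (μ : Measure E) : Prop :=
  ∫⁻ x, ENNReal.ofReal (‖x‖ ^ p) ∂μ < ⊤

/-- The generalized sliced Wasserstein discrepancy associated with a random slicer `S`:
`𝒟(μ,ν) = (∫_Ω W_p^p(S(ω,·)♯μ, S(ω,·)♯ν) dP(ω))^(1/p)`. -/
noncomputable def genSlicedW {Ω : Type*} [MeasurableSpace Ω] (P : Measure Ω) {D : ℕ}
    (S : Ω → EuclideanSpace ℝ (Fin D) → ℝ) (p : ℝ)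
    (μ ν : Measure (EuclideanSpace ℝ (Fin D))) : ℝ :=
  (∫ ω, wassersteinDist p (μ.map (S ω)) (ν.map (S ω)) ^ p ∂P) ^ (1 / p)

namespace GSW

open ProbabilityTheory

/-- `W_p^p` as an `ℝ≥0∞`-valued quantity. -/
noncomputable def Wpp {E : Type*} [MeasurableSpace E] [PseudoMetricSpace E]
    (p : ℝ) (μ ν : Measure E) : ℝ≥0∞ :=
  ⨅ π ∈ couplings μ ν, ∫⁻ q : E × E, ENNReal.ofReal (dist q.1 q.2 ^ p) ∂π

lemma wassersteinDist_eq {E : Type*} [MeasurableSpace E] [PseudoMetricSpace E]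
    (p : ℝ) (μ ν : Measure E) :
    wassersteinDist p μ ν = (Wpp p μ ν).toReal ^ (1 / p) := rfl

lemma prob_of_mem_couplings {E : Type*} [MeasurableSpace E] {μ ν : Measure E}
    [IsProbabilityMeasure μ] {π : Measure (E × E)} (h : π ∈ couplings μ ν) :
    IsProbabilityMeasure π := by
  constructor
  have h1 : π.map Prod.fst Set.univ = 1 := by rw [h.1]; exact measure_univ
  rwa [Measure.map_apply measurable_fst MeasurableSet.univ, Set.preimage_univ] at h1

lemma prod_mem_couplings {E : Type*} [MeasurableSpace E] (μ ν : Measure E)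
    [IsProbabilityMeasure μ] [IsProbabilityMeasure ν] :
    μ.prod ν ∈ couplings μ ν :=
  ⟨Measure.fst_prod, Measure.snd_prod⟩

lemma Wpp_le {E : Type*} [MeasurableSpace E] [PseudoMetricSpace E] {p : ℝ}
    {μ ν : Measure E} {π : Measure (E × E)} (h : π ∈ couplings μ ν) :
    Wpp p μ ν ≤ ∫⁻ q : E × E, ENNReal.ofReal (dist q.1 q.2 ^ p) ∂π :=
  biInf_le _ h

lemma Wpp_self {p : ℝ} (hp : p ≠ 0) (μ : Measure ℝ) : Wpp p μ μ = 0 := by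
  have hd : Measurable fun x : ℝ => (x, x) := measurable_id.prodMk measurable_id
  have hmem : μ.map (fun x => (x, x)) ∈ couplings μ μ := by
    constructor <;> rw [Measure.map_map (by fun_prop) hd] <;>
      simp [Function.comp_def]
  refine le_antisymm (le_trans (Wpp_le hmem) ?_) zero_le
  rw [lintegral_map (by fun_prop) hd]
  simp [Real.zero_rpow hp]

lemma wassersteinDist_self {p : ℝ} (hp : p ≠ 0) (μ : Measure ℝ) :
    wassersteinDist p μ μ = 0 := by
  rw [wassersteinDist_eq, Wpp_self hp]
  simp only [ENNReal.toReal_zero]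
  exact Real.zero_rpow (one_div_ne_zero hp)

lemma Wpp_symm_le (p : ℝ) (μ ν : Measure ℝ) : Wpp p ν μ ≤ Wpp p μ ν := by
  refine le_iInf₂ fun π hπ => ?_
  have hswap : π.map Prod.swap ∈ couplings ν μ := by
    constructor <;> rw [Measure.map_map (by fun_prop) measurable_swap]
    · exact hπ.2
    · exact hπ.1
  refine le_trans (Wpp_le hswap) (le_of_eq ?_)
  rw [lintegral_map (by fun_prop) measurable_swap]
  simp [Prod.swap, dist_comm]

lemma Wpp_symm (p : ℝ) (μ ν : Measure ℝ) : Wpp p μ ν = Wpp p ν μ :=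
  le_antisymm (Wpp_symm_le p ν μ) (Wpp_symm_le p μ ν)

/-- pointwise bound `dist x y ^ p ≤ 2^p * (|x|^p + |y|^p)` -/
lemma dist_rpow_le {p : ℝ} (hp : 1 ≤ p) (x y : ℝ) :
    dist x y ^ p ≤ 2 ^ p * (‖x‖ ^ p + ‖y‖ ^ p) := by
  have h0p : (0:ℝ) ≤ p := le_trans zero_le_one hp
  have habs : dist x y ≤ 2 * max ‖x‖ ‖y‖ := by
    rw [Real.dist_eq, Real.norm_eq_abs, Real.norm_eq_abs, two_mul]
    exact le_trans (abs_sub x y) (add_le_add (le_max_left _ _) (le_max_right _ _))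
  have hm : (0:ℝ) ≤ max ‖x‖ ‖y‖ := le_trans (norm_nonneg x) (le_max_left _ _)
  calc dist x y ^ p ≤ (2 * max ‖x‖ ‖y‖) ^ p := Real.rpow_le_rpow dist_nonneg habs h0p
    _ = 2 ^ p * max ‖x‖ ‖y‖ ^ p := Real.mul_rpow (by norm_num) hm
    _ ≤ 2 ^ p * (‖x‖ ^ p + ‖y‖ ^ p) := by
        refine mul_le_mul_of_nonneg_left ?_ (Real.rpow_nonneg (by norm_num) p)
        rcases le_total ‖x‖ ‖y‖ with h | h
        · rw [max_eq_right h]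
          exact le_add_of_nonneg_left (Real.rpow_nonneg (norm_nonneg _) p)
        · rw [max_eq_left h]
          exact le_add_of_nonneg_right (Real.rpow_nonneg (norm_nonneg _) p)

lemma Wpp_le_bound {p : ℝ} (hp : 1 ≤ p) (μ ν : Measure ℝ)
    [IsProbabilityMeasure μ] [IsProbabilityMeasure ν] :
    Wpp p μ ν ≤ ENNReal.ofReal (2 ^ p) *
      ((∫⁻ x, ENNReal.ofReal (‖x‖ ^ p) ∂μ) + ∫⁻ x, ENNReal.ofReal (‖x‖ ^ p) ∂ν) := by
  refine le_trans (Wpp_le (prod_mem_couplings μ ν)) ?_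
  have hb : ∀ q : ℝ × ℝ, ENNReal.ofReal (dist q.1 q.2 ^ p) ≤
      ENNReal.ofReal (2 ^ p) * (ENNReal.ofReal (‖q.1‖ ^ p) + ENNReal.ofReal (‖q.2‖ ^ p)) := by
    intro q
    refine le_trans (ENNReal.ofReal_le_ofReal (dist_rpow_le hp q.1 q.2)) (le_of_eq ?_)
    rw [ENNReal.ofReal_mul (Real.rpow_nonneg (by norm_num) p),
      ENNReal.ofReal_add (Real.rpow_nonneg (norm_nonneg _) p) (Real.rpow_nonneg (norm_nonneg _) p)]
  refine le_trans (lintegral_mono hb) (le_of_eq ?_)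
  rw [lintegral_const_mul _ (by fun_prop)]
  congr 1
  rw [lintegral_add_left (by fun_prop)]
  congr 1
  · have h1 : ∫⁻ x, ENNReal.ofReal (‖x‖ ^ p) ∂((μ.prod ν).map Prod.fst) =
        ∫⁻ q : ℝ × ℝ, ENNReal.ofReal (‖q.1‖ ^ p) ∂(μ.prod ν) :=
      lintegral_map (by fun_prop) measurable_fst
    rw [← h1]
    congr 1
    exact Measure.fst_prod
  · have h1 : ∫⁻ x, ENNReal.ofReal (‖x‖ ^ p) ∂((μ.prod ν).map Prod.snd) =
        ∫⁻ q : ℝ × ℝ, ENNReal.ofReal (‖q.2‖ ^ p) ∂(μ.prod ν) :=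
      lintegral_map (by fun_prop) measurable_snd
    rw [← h1]
    congr 1
    exact Measure.snd_prod

lemma rpow_iInf {ι : Sort*} (f : ι → ℝ≥0∞) {y : ℝ} (hy : 0 < y) :
    (⨅ i, f i) ^ y = ⨅ i, f i ^ y := by
  have h := (ENNReal.orderIsoRpow y hy).map_iInf f
  have happ : ∀ x : ℝ≥0∞, (ENNReal.orderIsoRpow y hy) x = x ^ y := fun x => rfl
  rw [happ] at h
  rw [h]
  exact iInf_congr fun i => happ (f i)


lemma Wpp_triangle_coupling {p : ℝ} (hp : 1 ≤ p) {m₁ m₂ m₃ : Measure ℝ}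
    [IsProbabilityMeasure m₁] [IsProbabilityMeasure m₂] [IsProbabilityMeasure m₃]
    {π₁₂ π₂₃ : Measure (ℝ × ℝ)} (h12 : π₁₂ ∈ couplings m₁ m₂) (h23 : π₂₃ ∈ couplings m₂ m₃) :
    Wpp p m₁ m₃ ^ (1/p) ≤ (∫⁻ q : ℝ × ℝ, ENNReal.ofReal (dist q.1 q.2 ^ p) ∂π₁₂) ^ (1/p)
      + (∫⁻ q : ℝ × ℝ, ENNReal.ofReal (dist q.1 q.2 ^ p) ∂π₂₃) ^ (1/p) := by
  have h0p : (0:ℝ) ≤ p := le_trans zero_le_one hp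
  have h0invp : (0:ℝ) ≤ 1/p := by positivity
  haveI : IsProbabilityMeasure π₁₂ := prob_of_mem_couplings h12
  haveI : IsProbabilityMeasure π₂₃ := prob_of_mem_couplings h23
  set ρ : Measure (ℝ × ℝ) := π₁₂.map Prod.swap with hρ
  haveI : IsProbabilityMeasure ρ := Measure.isProbabilityMeasure_map measurable_swap.aemeasurable
  have hρfst : ρ.fst = m₂ := by
    rw [Measure.fst, hρ, Measure.map_map measurable_fst measurable_swap]
    exact h12.2
  have hπ23fst : π₂₃.fst = m₂ := h23.1
  set κ₁ := ρ.condKernel with hκ₁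
  set κ₃ := π₂₃.condKernel with hκ₃
  set τ : Measure (ℝ × (ℝ × ℝ)) := m₂ ⊗ₘ (κ₁ ×ₖ κ₃) with hτ
  have hglue1 : m₂ ⊗ₘ κ₁ = ρ := by rw [← hρfst]; exact ρ.disintegrate ρ.condKernel
  have hglue3 : m₂ ⊗ₘ κ₃ = π₂₃ := by rw [← hπ23fst]; exact π₂₃.disintegrate π₂₃.condKernel
  -- the two "edge" marginals of τ
  have hmap1 : τ.map (fun q : ℝ × (ℝ × ℝ) => (q.1, q.2.1)) = ρ := by
    rw [← hglue1]
    ext s hs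
    rw [Measure.map_apply (by fun_prop) hs,
      Measure.compProd_apply ((by fun_prop : Measurable fun q : ℝ × (ℝ × ℝ) => (q.1, q.2.1)) hs),
      Measure.compProd_apply hs]
    refine lintegral_congr fun y => ?_
    have hset : (Prod.mk y ⁻¹' ((fun q : ℝ × (ℝ × ℝ) => (q.1, q.2.1)) ⁻¹' s)) =
        (Prod.mk y ⁻¹' s) ×ˢ Set.univ := by
      ext w; simp [Set.mem_prod]
    rw [hset, Kernel.prod_apply, Measure.prod_prod, measure_univ, mul_one]
  have hmap3 : τ.map (fun q : ℝ × (ℝ × ℝ) => (q.1, q.2.2)) = π₂₃ := by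
    rw [← hglue3]
    ext s hs
    rw [Measure.map_apply (by fun_prop) hs,
      Measure.compProd_apply ((by fun_prop : Measurable fun q : ℝ × (ℝ × ℝ) => (q.1, q.2.2)) hs),
      Measure.compProd_apply hs]
    refine lintegral_congr fun y => ?_
    have hset : (Prod.mk y ⁻¹' ((fun q : ℝ × (ℝ × ℝ) => (q.1, q.2.2)) ⁻¹' s)) =
        Set.univ ×ˢ (Prod.mk y ⁻¹' s) := by
      ext w; simp [Set.mem_prod]
    rw [hset, Kernel.prod_apply, Measure.prod_prod, measure_univ, one_mul]
  -- the glued coupling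
  set π₁₃ : Measure (ℝ × ℝ) := τ.map (fun q => q.2) with hπ₁₃
  have hmem : π₁₃ ∈ couplings m₁ m₃ := by
    constructor
    · have e1 : π₁₃.map Prod.fst = τ.map (fun q : ℝ × (ℝ × ℝ) => q.2.1) := by
        rw [hπ₁₃, Measure.map_map measurable_fst (by fun_prop)]; rfl
      have e2 : τ.map (fun q : ℝ × (ℝ × ℝ) => q.2.1) =
          (τ.map (fun q : ℝ × (ℝ × ℝ) => (q.1, q.2.1))).map Prod.snd := by
        rw [Measure.map_map measurable_snd (by fun_prop)]; rfl
      rw [e1, e2, hmap1, hρ, Measure.map_map measurable_snd measurable_swap]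
      exact h12.1
    · have e1 : π₁₃.map Prod.snd = τ.map (fun q : ℝ × (ℝ × ℝ) => q.2.2) := by
        rw [hπ₁₃, Measure.map_map measurable_snd (by fun_prop)]; rfl
      have e2 : τ.map (fun q : ℝ × (ℝ × ℝ) => q.2.2) =
          (τ.map (fun q : ℝ × (ℝ × ℝ) => (q.1, q.2.2))).map Prod.snd := by
        rw [Measure.map_map measurable_snd (by fun_prop)]; rfl
      rw [e1, e2, hmap3]
      exact h23.2
  -- cost computation via Minkowski
  set F : ℝ × (ℝ × ℝ) → ℝ≥0∞ := fun q => ENNReal.ofReal (dist q.2.1 q.1) with hF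
  set G : ℝ × (ℝ × ℝ) → ℝ≥0∞ := fun q => ENNReal.ofReal (dist q.1 q.2.2) with hG
  have hFm : Measurable F := by fun_prop
  have hGm : Measurable G := by fun_prop
  have hcost : ∫⁻ q : ℝ × ℝ, ENNReal.ofReal (dist q.1 q.2 ^ p) ∂π₁₃ =
      ∫⁻ q, ENNReal.ofReal (dist q.2.1 q.2.2) ^ p ∂τ := by
    rw [hπ₁₃, lintegral_map (by fun_prop) (by fun_prop)]
    refine lintegral_congr fun q => ?_
    rw [ENNReal.ofReal_rpow_of_nonneg dist_nonneg h0p]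
  have hptw : ∀ q : ℝ × (ℝ × ℝ), ENNReal.ofReal (dist q.2.1 q.2.2) ≤ (F + G) q := by
    intro q
    refine le_trans (ENNReal.ofReal_le_ofReal (dist_triangle q.2.1 q.1 q.2.2)) (le_of_eq ?_)
    exact ENNReal.ofReal_add dist_nonneg dist_nonneg
  have hFcost : ∫⁻ q, F q ^ p ∂τ = ∫⁻ q : ℝ × ℝ, ENNReal.ofReal (dist q.1 q.2 ^ p) ∂π₁₂ := by
    have e1 : ∫⁻ q, F q ^ p ∂τ = ∫⁻ q, ENNReal.ofReal (dist q.2 q.1 ^ p)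
        ∂(τ.map (fun q : ℝ × (ℝ × ℝ) => (q.1, q.2.1))) := by
      rw [lintegral_map (by fun_prop) (by fun_prop)]
      refine lintegral_congr fun q => ?_
      rw [hF, ENNReal.ofReal_rpow_of_nonneg dist_nonneg h0p]
    rw [e1, hmap1, hρ, lintegral_map (by fun_prop) measurable_swap]
    refine lintegral_congr fun q => by rw [Prod.snd_swap, Prod.fst_swap]
  have hGcost : ∫⁻ q, G q ^ p ∂τ = ∫⁻ q : ℝ × ℝ, ENNReal.ofReal (dist q.1 q.2 ^ p) ∂π₂₃ := by
    have e1 : ∫⁻ q, G q ^ p ∂τ = ∫⁻ q, ENNReal.ofReal (dist q.1 q.2 ^ p)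
        ∂(τ.map (fun q : ℝ × (ℝ × ℝ) => (q.1, q.2.2))) := by
      rw [lintegral_map (by fun_prop) (by fun_prop)]
      refine lintegral_congr fun q => ?_
      rw [hG, ENNReal.ofReal_rpow_of_nonneg dist_nonneg h0p]
    rw [e1, hmap3]
  calc Wpp p m₁ m₃ ^ (1/p)
      ≤ (∫⁻ q : ℝ × ℝ, ENNReal.ofReal (dist q.1 q.2 ^ p) ∂π₁₃) ^ (1/p) :=
        ENNReal.rpow_le_rpow (Wpp_le hmem) h0invp
    _ = (∫⁻ q, ENNReal.ofReal (dist q.2.1 q.2.2) ^ p ∂τ) ^ (1/p) := by rw [hcost]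
    _ ≤ (∫⁻ q, (F + G) q ^ p ∂τ) ^ (1/p) := by
        refine ENNReal.rpow_le_rpow (lintegral_mono fun q => ?_) h0invp
        exact ENNReal.rpow_le_rpow (hptw q) h0p
    _ ≤ (∫⁻ q, F q ^ p ∂τ) ^ (1/p) + (∫⁻ q, G q ^ p ∂τ) ^ (1/p) :=
        ENNReal.lintegral_Lp_add_le hFm.aemeasurable hGm.aemeasurable hp
    _ = (∫⁻ q : ℝ × ℝ, ENNReal.ofReal (dist q.1 q.2 ^ p) ∂π₁₂) ^ (1/p)
        + (∫⁻ q : ℝ × ℝ, ENNReal.ofReal (dist q.1 q.2 ^ p) ∂π₂₃) ^ (1/p) := by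
        rw [hFcost, hGcost]

lemma Wpp_triangle {p : ℝ} (hp : 1 ≤ p) (m₁ m₂ m₃ : Measure ℝ)
    [IsProbabilityMeasure m₁] [IsProbabilityMeasure m₂] [IsProbabilityMeasure m₃] :
    Wpp p m₁ m₃ ^ (1/p) ≤ Wpp p m₁ m₂ ^ (1/p) + Wpp p m₂ m₃ ^ (1/p) := by
  have hpinv : (0:ℝ) < 1/p := by positivity
  have key : Wpp p m₁ m₃ ^ (1/p) ≤
      ⨅ π₁₂ ∈ couplings m₁ m₂, ⨅ π₂₃ ∈ couplings m₂ m₃,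
        ((∫⁻ q : ℝ × ℝ, ENNReal.ofReal (dist q.1 q.2 ^ p) ∂π₁₂) ^ (1/p)
          + (∫⁻ q : ℝ × ℝ, ENNReal.ofReal (dist q.1 q.2 ^ p) ∂π₂₃) ^ (1/p)) :=
    le_iInf₂ fun π₁₂ h12 => le_iInf₂ fun π₂₃ h23 => Wpp_triangle_coupling hp h12 h23
  refine le_trans key (le_of_eq ?_)
  have inner : ∀ c : ℝ≥0∞,
      (⨅ π ∈ couplings m₂ m₃,
        (c + (∫⁻ q : ℝ × ℝ, ENNReal.ofReal (dist q.1 q.2 ^ p) ∂π) ^ (1/p))) =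
      c + (⨅ π ∈ couplings m₂ m₃,
        (∫⁻ q : ℝ × ℝ, ENNReal.ofReal (dist q.1 q.2 ^ p) ∂π) ^ (1/p)) := by
    intro c
    rw [ENNReal.add_iInf]
    exact iInf_congr fun π => by rw [ENNReal.add_iInf]
  have step1 : (⨅ π₁₂ ∈ couplings m₁ m₂, ⨅ π₂₃ ∈ couplings m₂ m₃,
      ((∫⁻ q : ℝ × ℝ, ENNReal.ofReal (dist q.1 q.2 ^ p) ∂π₁₂) ^ (1/p)
        + (∫⁻ q : ℝ × ℝ, ENNReal.ofReal (dist q.1 q.2 ^ p) ∂π₂₃) ^ (1/p))) =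
      (⨅ π ∈ couplings m₁ m₂, (∫⁻ q : ℝ × ℝ, ENNReal.ofReal (dist q.1 q.2 ^ p) ∂π) ^ (1/p))
      + (⨅ π ∈ couplings m₂ m₃, (∫⁻ q : ℝ × ℝ, ENNReal.ofReal (dist q.1 q.2 ^ p) ∂π) ^ (1/p)) := by
    rw [ENNReal.iInf_add]
    refine iInf_congr fun π₁₂ => ?_
    rw [ENNReal.iInf_add]
    exact iInf_congr fun h12 => inner _
  rw [step1, Wpp, Wpp, rpow_iInf _ hpinv, rpow_iInf _ hpinv]
  congr 1 <;> exact iInf_congr fun π => (rpow_iInf _ hpinv).symm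


lemma moment_map_le {D : ℕ} {p : ℝ} (h0p : 0 ≤ p) (m : Measure (EuclideanSpace ℝ (Fin D)))
    {f : EuclideanSpace ℝ (Fin D) → ℝ} (hf : Measurable f) (hb : ∀ x, |f x| ≤ ‖x‖) :
    ∫⁻ y, ENNReal.ofReal (‖y‖ ^ p) ∂(m.map f) ≤ ∫⁻ x, ENNReal.ofReal (‖x‖ ^ p) ∂m := by
  rw [lintegral_map (by fun_prop) hf]
  refine lintegral_mono fun x => ENNReal.ofReal_le_ofReal ?_
  refine Real.rpow_le_rpow (norm_nonneg _) ?_ h0p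
  simpa [Real.norm_eq_abs] using hb x

lemma main_aux {Ω : Type*} [MeasurableSpace Ω] (P : Measure Ω) [IsProbabilityMeasure P]
    {D : ℕ} (S : Ω → EuclideanSpace ℝ (Fin D) → ℝ) {p : ℝ} (hp : 1 ≤ p)
    (hSω : ∀ ω, Measurable (S ω)) (hbound : ∀ ω x, |S ω x| ≤ ‖x‖)
    (a b : Measure (EuclideanSpace ℝ (Fin D)))
    [IsProbabilityMeasure a] [IsProbabilityMeasure b]
    (ha : FiniteMomentP p a) (hb : FiniteMomentP p b)
    (hmeas : Measurable fun ω => wassersteinDist p (a.map (S ω)) (b.map (S ω)) ^ p) :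
    genSlicedW P S p a b = ((∫⁻ ω, Wpp p (a.map (S ω)) (b.map (S ω)) ∂P) ^ (1/p)).toReal
    ∧ (∫⁻ ω, Wpp p (a.map (S ω)) (b.map (S ω)) ∂P) ≠ ⊤
    ∧ Measurable (fun ω => Wpp p (a.map (S ω)) (b.map (S ω))) := by
  have hp0 : (0:ℝ) < p := lt_of_lt_of_le zero_lt_one hp
  have hpne : p ≠ 0 := ne_of_gt hp0
  haveI hPa : ∀ ω, IsProbabilityMeasure (a.map (S ω)) :=
    fun ω => Measure.isProbabilityMeasure_map (hSω ω).aemeasurable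
  haveI hPb : ∀ ω, IsProbabilityMeasure (b.map (S ω)) :=
    fun ω => Measure.isProbabilityMeasure_map (hSω ω).aemeasurable
  set C : ℝ≥0∞ := ENNReal.ofReal (2 ^ p) *
    ((∫⁻ x, ENNReal.ofReal (‖x‖ ^ p) ∂a) + ∫⁻ x, ENNReal.ofReal (‖x‖ ^ p) ∂b) with hC
  have hCne : C ≠ ⊤ := by
    rw [hC]
    exact ENNReal.mul_ne_top ENNReal.ofReal_ne_top
      (ENNReal.add_ne_top.2 ⟨ne_of_lt ha, ne_of_lt hb⟩)
  have hle : ∀ ω, Wpp p (a.map (S ω)) (b.map (S ω)) ≤ C := by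
    intro ω
    refine le_trans (Wpp_le_bound hp _ _) ?_
    rw [hC]
    exact mul_le_mul_right (add_le_add
      (moment_map_le (le_of_lt hp0) a (hSω ω) (hbound ω))
      (moment_map_le (le_of_lt hp0) b (hSω ω) (hbound ω))) _
  have hne : ∀ ω, Wpp p (a.map (S ω)) (b.map (S ω)) ≠ ⊤ :=
    fun ω => ne_top_of_le_ne_top hCne (hle ω)
  have hkey : ∀ ω, wassersteinDist p (a.map (S ω)) (b.map (S ω)) ^ p =
      (Wpp p (a.map (S ω)) (b.map (S ω))).toReal := by
    intro ω
    rw [wassersteinDist_eq, one_div, Real.rpow_inv_rpow ENNReal.toReal_nonneg hpne]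
  have hmeas' : Measurable fun ω => (Wpp p (a.map (S ω)) (b.map (S ω))).toReal := by
    simp only [hkey] at hmeas; exact hmeas
  have hmeasW : Measurable fun ω => Wpp p (a.map (S ω)) (b.map (S ω)) := by
    have heq : (fun ω => Wpp p (a.map (S ω)) (b.map (S ω))) =
        fun ω => ENNReal.ofReal ((Wpp p (a.map (S ω)) (b.map (S ω))).toReal) :=
      funext fun ω => (ENNReal.ofReal_toReal (hne ω)).symm
    rw [heq]
    exact hmeas'.ennreal_ofReal
  have hintne : (∫⁻ ω, Wpp p (a.map (S ω)) (b.map (S ω)) ∂P) ≠ ⊤ := by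
    refine ne_top_of_le_ne_top ?_ (lintegral_mono hle)
    rw [lintegral_const, measure_univ, mul_one]
    exact hCne
  refine ⟨?_, hintne, hmeasW⟩
  rw [genSlicedW]
  simp only [hkey]
  rw [integral_toReal hmeasW.aemeasurable
    (Filter.Eventually.of_forall fun ω => lt_top_iff_ne_top.2 (hne ω))]
  exact ENNReal.toReal_rpow _ _

end GSW

/-- Theorem 1 (general slicer form): if `S : Ω × ℝ^D → ℝ` is jointly measurable with
`|S(ω,x)| ≤ ‖x‖`, and the maps `ω ↦ W_p^p(S(ω,·)♯μ, S(ω,·)♯ν)` are measurable, then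
`𝒟(μ,ν) = (∫_Ω W_p^p(S(ω,·)♯μ, S(ω,·)♯ν) dP(ω))^(1/p)` is a pseudo-metric on Borel probability
measures on `ℝ^D` with finite `p`-th moments. -/
theorem genSlicedW_pseudometric (D : ℕ) (hD : 1 ≤ D) (p : ℝ) (hp : 1 ≤ p)
    {Ω : Type*} [MeasurableSpace Ω] (P : Measure Ω) [IsProbabilityMeasure P]
    (S : Ω → EuclideanSpace ℝ (Fin D) → ℝ)
    (hS : Measurable (Function.uncurry S))
    (hbound : ∀ ω x, |S ω x| ≤ ‖x‖)
    (hmeas : ∀ μ ν : Measure (EuclideanSpace ℝ (Fin D)), IsProbabilityMeasure μ →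
      IsProbabilityMeasure ν → FiniteMomentP p μ → FiniteMomentP p ν →
      Measurable fun ω => wassersteinDist p (μ.map (S ω)) (ν.map (S ω)) ^ p)
    (μ ν μ₁ μ₂ μ₃ : Measure (EuclideanSpace ℝ (Fin D)))
    [IsProbabilityMeasure μ] [IsProbabilityMeasure ν] [IsProbabilityMeasure μ₁]
    [IsProbabilityMeasure μ₂] [IsProbabilityMeasure μ₃]
    (hμ : FiniteMomentP p μ) (hν : FiniteMomentP p ν) (h₁ : FiniteMomentP p μ₁)
    (h₂ : FiniteMomentP p μ₂) (h₃ : FiniteMomentP p μ₃) :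
    genSlicedW P S p μ μ = 0 ∧ genSlicedW P S p μ ν = genSlicedW P S p ν μ ∧
      genSlicedW P S p μ₁ μ₃ ≤ genSlicedW P S p μ₁ μ₂ + genSlicedW P S p μ₂ μ₃ := by
  have hp0 : (0:ℝ) < p := lt_of_lt_of_le zero_lt_one hp
  have hpne : p ≠ 0 := ne_of_gt hp0
  have h0invp : (0:ℝ) ≤ 1/p := by positivity
  have hSω : ∀ ω, Measurable (S ω) := fun ω => hS.comp measurable_prodMk_left
  haveI hP1 : ∀ ω, IsProbabilityMeasure (μ₁.map (S ω)) :=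
    fun ω => Measure.isProbabilityMeasure_map (hSω ω).aemeasurable
  haveI hP2 : ∀ ω, IsProbabilityMeasure (μ₂.map (S ω)) :=
    fun ω => Measure.isProbabilityMeasure_map (hSω ω).aemeasurable
  haveI hP3 : ∀ ω, IsProbabilityMeasure (μ₃.map (S ω)) :=
    fun ω => Measure.isProbabilityMeasure_map (hSω ω).aemeasurable
  refine ⟨?_, ?_, ?_⟩
  · -- reflexivity
    have hz : ∀ ω : Ω, wassersteinDist p (μ.map (S ω)) (μ.map (S ω)) ^ p = 0 := by
      intro ω
      rw [GSW.wassersteinDist_self hpne]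
      exact Real.zero_rpow hpne
    rw [genSlicedW]
    simp only [hz, integral_zero]
    exact Real.zero_rpow (one_div_ne_zero hpne)
  · -- symmetry
    have hsym : ∀ ω : Ω, wassersteinDist p (μ.map (S ω)) (ν.map (S ω)) ^ p =
        wassersteinDist p (ν.map (S ω)) (μ.map (S ω)) ^ p := by
      intro ω
      rw [GSW.wassersteinDist_eq, GSW.wassersteinDist_eq, GSW.Wpp_symm]
    rw [genSlicedW, genSlicedW]
    simp only [hsym]
  · -- triangle inequality
    obtain ⟨e13, f13, m13⟩ := GSW.main_aux P S hp hSω hbound μ₁ μ₃ h₁ h₃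
      (hmeas μ₁ μ₃ inferInstance inferInstance h₁ h₃)
    obtain ⟨e12, f12, m12⟩ := GSW.main_aux P S hp hSω hbound μ₁ μ₂ h₁ h₂
      (hmeas μ₁ μ₂ inferInstance inferInstance h₁ h₂)
    obtain ⟨e23, f23, m23⟩ := GSW.main_aux P S hp hSω hbound μ₂ μ₃ h₂ h₃
      (hmeas μ₂ μ₃ inferInstance inferInstance h₂ h₃)
    set w13 : Ω → ℝ≥0∞ := fun ω => GSW.Wpp p (μ₁.map (S ω)) (μ₃.map (S ω)) with hw13
    set w12 : Ω → ℝ≥0∞ := fun ω => GSW.Wpp p (μ₁.map (S ω)) (μ₂.map (S ω)) with hw12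
    set w23 : Ω → ℝ≥0∞ := fun ω => GSW.Wpp p (μ₂.map (S ω)) (μ₃.map (S ω)) with hw23
    set f : Ω → ℝ≥0∞ := fun ω => w12 ω ^ (1/p) with hf
    set g : Ω → ℝ≥0∞ := fun ω => w23 ω ^ (1/p) with hg
    have hfm : Measurable f := (ENNReal.continuous_rpow_const.measurable).comp m12
    have hgm : Measurable g := (ENNReal.continuous_rpow_const.measurable).comp m23
    have htri : ∀ ω, w13 ω ^ (1/p) ≤ (f + g) ω := fun ω =>
      GSW.Wpp_triangle hp (μ₁.map (S ω)) (μ₂.map (S ω)) (μ₃.map (S ω))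
    have hback : ∀ (w : Ω → ℝ≥0∞) (ω : Ω), (w ω ^ (1/p)) ^ p = w ω := by
      intro w ω
      rw [one_div, ENNReal.rpow_inv_rpow hpne]
    have mink : (∫⁻ ω, w13 ω ∂P) ^ (1/p) ≤
        (∫⁻ ω, w12 ω ∂P) ^ (1/p) + (∫⁻ ω, w23 ω ∂P) ^ (1/p) := by
      calc (∫⁻ ω, w13 ω ∂P) ^ (1/p)
          = (∫⁻ ω, (w13 ω ^ (1/p)) ^ p ∂P) ^ (1/p) := by
            congr 1; exact lintegral_congr fun ω => (hback w13 ω).symm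
        _ ≤ (∫⁻ ω, (f + g) ω ^ p ∂P) ^ (1/p) := by
            refine ENNReal.rpow_le_rpow (lintegral_mono fun ω => ?_) h0invp
            exact ENNReal.rpow_le_rpow (htri ω) (le_of_lt hp0)
        _ ≤ (∫⁻ ω, f ω ^ p ∂P) ^ (1/p) + (∫⁻ ω, g ω ^ p ∂P) ^ (1/p) :=
            ENNReal.lintegral_Lp_add_le hfm.aemeasurable hgm.aemeasurable hp
        _ = (∫⁻ ω, w12 ω ∂P) ^ (1/p) + (∫⁻ ω, w23 ω ∂P) ^ (1/p) := by
            congr 1 <;> · congr 1; exact lintegral_congr fun ω => hback _ ω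
    have h12ne : (∫⁻ ω, w12 ω ∂P) ^ (1/p) ≠ ⊤ := ENNReal.rpow_ne_top_of_nonneg h0invp f12
    have h23ne : (∫⁻ ω, w23 ω ∂P) ^ (1/p) ≠ ⊤ := ENNReal.rpow_ne_top_of_nonneg h0invp f23
    rw [e13, e12, e23, ← ENNReal.toReal_add h12ne h23ne]
    exact ENNReal.toReal_mono (ENNReal.add_ne_top.2 ⟨h12ne, h23ne⟩) mink

end
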